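/- Let V : ℝ → ℝ be convex, bounded below, L-Lipschitz, and nonincreasing (its subdifferential is contained in [-L, 0]). Let β > K·L for a positive integer K, and let X be a random vector in ℝ^D with E‖X‖ < ∞. Define, for w = (w_1,…,w_K) ∈ (ℝ^D)^K, L(w) = E_{X,m}[∑_{k=1}^K V(m_k ⟨w_k, X + ∑_{j=1}^K m_j w_j⟩)] + β ∑_{k=1}^K ‖w_k‖², where m is uniform on {±1}^K independent of X. Then w = 0 is the unique global minimizer of L. -/
import Mathlib


open MeasureTheory ProbabilityTheory Real

/-- Euclidean inner product on `Fin n → ℝ`. -/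
noncomputable def dotp {n : ℕ} (x y : Fin n → ℝ) : ℝ := ∑ i, x i * y i

/-- Sign associated to a Boolean bit: `true ↦ 1`, `false ↦ -1`. -/
noncomputable def sgnB (b : Bool) : ℝ := if b then 1 else -1

/-- if `V` is convex, bounded below, `L`-Lipschitz and nonincreasing,
and `β > K·L`, then `w = 0` is the unique global minimizer of the population
objective `L(w)`. -/
theorem stmt0 {D K : ℕ} (hK : 0 < K)
    (V : ℝ → ℝ) (hconv : ConvexOn ℝ Set.univ V)
    (hbdd : BddBelow (Set.range V))
    (L : ℝ) (hL : 0 ≤ L) (hLip : LipschitzWith L.toNNReal V)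
    (hanti : Antitone V)
    (β : ℝ) (hβ : (K : ℝ) * L < β)
    {Ω : Type*} [MeasureSpace Ω] [IsProbabilityMeasure (ℙ : Measure Ω)]
    (X : Ω → Fin D → ℝ) (hX : Measurable X)
    (hint : Integrable (fun ω => Real.sqrt (dotp (X ω) (X ω))) ℙ)
    (Lfun : (Fin K → Fin D → ℝ) → ℝ)
    (hLfun : ∀ w, Lfun w =
      (∫ ω, (2 ^ K : ℝ)⁻¹ *
        ∑ m : Fin K → Bool, ∑ k : Fin K,
          V (sgnB (m k) *
            dotp (w k) (fun i => X ω i + ∑ j : Fin K, sgnB (m j) * w j i)) ∂ℙ)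
      + β * ∑ k : Fin K, dotp (w k) (w k)) :
    ∀ w : Fin K → Fin D → ℝ, w ≠ 0 → Lfun 0 < Lfun w := by
  -- basic scalar facts
  have hmid : ∀ x c : ℝ, 2 * V c ≤ V x + V (2 * c - x) := by
    intro x c
    have h := hconv.2 (Set.mem_univ x) (Set.mem_univ (2 * c - x))
      (by norm_num : (0:ℝ) ≤ 1/2) (by norm_num : (0:ℝ) ≤ 1/2) (by norm_num)
    simp only [smul_eq_mul] at h
    have e : (1/2:ℝ) * x + (1/2) * (2 * c - x) = c := by ring
    rw [e] at h
    linarith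
  have hlipR : ∀ s t : ℝ, |V s - V t| ≤ L * |s - t| := by
    intro s t
    have := hLip.dist_le_mul s t
    rw [Real.dist_eq, Real.dist_eq] at this
    simpa [Real.coe_toNNReal L hL] using this
  have hsgn_abs : ∀ b, |sgnB b| = 1 := by intro b; cases b <;> simp [sgnB]
  have hsgn_sq : ∀ b, sgnB b * sgnB b = 1 := by intro b; cases b <;> norm_num [sgnB]
  have hsgn_not : ∀ b, sgnB (!b) = - sgnB b := by intro b; cases b <;> simp [sgnB]
  -- value at 0
  have hzero : Lfun 0 = K * V 0 := by
    rw [hLfun]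
    have e1 : (fun ω : Ω => (2 ^ K : ℝ)⁻¹ *
        ∑ m : Fin K → Bool, ∑ k : Fin K,
          V (sgnB (m k) *
            dotp ((0 : Fin K → Fin D → ℝ) k)
              (fun i => X ω i + ∑ j : Fin K, sgnB (m j) * (0 : Fin K → Fin D → ℝ) j i)))
        = fun _ : Ω => (K : ℝ) * V 0 := by
      funext ω
      simp [dotp, Finset.sum_const, Finset.card_univ]
    rw [e1]
    simp [dotp]
  intro w hw
  -- linearity of dotp
  have hdot : ∀ (u v : Fin D → ℝ) (t : Fin K → ℝ) (y : Fin K → Fin D → ℝ),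
      dotp u (fun i => v i + ∑ j, t j * y j i)
        = dotp u v + ∑ j, t j * dotp u (y j) := by
    intro u v t y
    simp only [dotp, mul_add, Finset.sum_add_distrib, Finset.mul_sum]
    congr 1
    rw [Finset.sum_comm]
    apply Finset.sum_congr rfl; intro j _
    apply Finset.sum_congr rfl; intro i _
    ring
  set c : Fin K → ℝ := fun k => dotp (w k) (w k) with hc
  have hcnonneg : ∀ k, 0 ≤ c k :=
    fun k => Finset.sum_nonneg fun i _ => mul_self_nonneg _
  have hcpos : 0 < ∑ k, c k := by
    obtain ⟨k, hk'⟩ : ∃ k, w k ≠ 0 := by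
      by_contra h
      push_neg at h
      exact hw (funext fun k => h k)
    obtain ⟨i, hi⟩ : ∃ i, w k i ≠ 0 := by
      by_contra h
      push_neg at h
      exact hk' (funext fun i => h i)
    apply Finset.sum_pos' (fun k _ => hcnonneg k)
    refine ⟨k, Finset.mem_univ k, ?_⟩
    apply Finset.sum_pos' (fun i _ => mul_self_nonneg _)
    exact ⟨i, Finset.mem_univ i, mul_self_pos.mpr hi⟩
  -- the integrand
  set g : Ω → ℝ := fun ω => (2 ^ K : ℝ)⁻¹ *
      ∑ m : Fin K → Bool, ∑ k : Fin K,
        V (sgnB (m k) *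
          dotp (w k) (fun i => X ω i + ∑ j : Fin K, sgnB (m j) * w j i)) with hg
  -- pointwise lower bound
  have key : ∀ ω, (K : ℝ) * V 0 - L * ∑ k, c k ≤ g ω := by
    intro ω
    have hk : ∀ k : Fin K, (2 ^ K : ℝ) * (V 0 - L * c k) ≤
        ∑ m : Fin K → Bool,
          V (sgnB (m k) *
            dotp (w k) (fun i => X ω i + ∑ j : Fin K, sgnB (m j) * w j i)) := by
      intro k
      set F : (Fin K → Bool) → ℝ := fun m =>
        V (sgnB (m k) *
          dotp (w k) (fun i => X ω i + ∑ j : Fin K, sgnB (m j) * w j i)) with hF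
      have hinv : Function.Involutive
          (fun m : Fin K → Bool => Function.update m k (!(m k))) := by
        intro m; funext j
        by_cases h : j = k
        · subst h; simp
        · simp [Function.update_of_ne h]
      have hflipsum : ∑ m, F (Function.update m k (!(m k))) = ∑ m, F m :=
        Equiv.sum_comp hinv.toPerm F
      have pair : ∀ m : Fin K → Bool,
          2 * V (c k) ≤ F m + F (Function.update m k (!(m k))) := by
        intro m
        have hupd : ∑ j, sgnB (Function.update m k (!(m k)) j) * dotp (w k) (w j)
            = (∑ j, sgnB (m j) * dotp (w k) (w j)) - 2 * sgnB (m k) * c k := by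
          have h1 := Finset.add_sum_erase Finset.univ
            (fun j => sgnB (Function.update m k (!(m k)) j) * dotp (w k) (w j))
            (Finset.mem_univ k)
          have h2 := Finset.add_sum_erase Finset.univ
            (fun j => sgnB (m j) * dotp (w k) (w j)) (Finset.mem_univ k)
          have h3 : ∑ j ∈ Finset.univ.erase k,
                sgnB (Function.update m k (!(m k)) j) * dotp (w k) (w j)
              = ∑ j ∈ Finset.univ.erase k, sgnB (m j) * dotp (w k) (w j) := by
            apply Finset.sum_congr rfl
            intro j hj
            rw [Function.update_of_ne (Finset.ne_of_mem_erase hj)]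
          rw [← h1, ← h2, h3]
          simp only [Function.update_self, hsgn_not, hc]
          ring
        have harg : sgnB (Function.update m k (!(m k)) k) *
            dotp (w k) (fun i => X ω i +
              ∑ j : Fin K, sgnB (Function.update m k (!(m k)) j) * w j i)
            = 2 * c k - sgnB (m k) *
              dotp (w k) (fun i => X ω i + ∑ j : Fin K, sgnB (m j) * w j i) := by
          rw [hdot, hdot, hupd, Function.update_self, hsgn_not]
          linear_combination (2 * c k) * hsgn_sq (m k)
        have := hmid (sgnB (m k) *
          dotp (w k) (fun i => X ω i + ∑ j : Fin K, sgnB (m j) * w j i)) (c k)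
        simp only [hF]
        rw [harg]
        linarith
      have h2 : (2 ^ K : ℝ) * (2 * V (c k)) ≤ 2 * ∑ m, F m := by
        have hs : ∑ m : Fin K → Bool, (2 * V (c k)) ≤
            ∑ m : Fin K → Bool, (F m + F (Function.update m k (!(m k)))) :=
          Finset.sum_le_sum fun m _ => pair m
        rw [Finset.sum_add_distrib, hflipsum, Finset.sum_const, Finset.card_univ] at hs
        simp only [Fintype.card_fun, Fintype.card_bool, Fintype.card_fin,
          nsmul_eq_mul, Nat.cast_pow, Nat.cast_ofNat] at hs
        linarith
      have hVc : V 0 - L * c k ≤ V (c k) := by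
        have := hlipR 0 (c k)
        have habs : |0 - c k| = c k := by
          rw [abs_sub_comm]; rw [sub_zero]; exact abs_of_nonneg (hcnonneg k)
        rw [habs] at this
        have := abs_le.mp this
        linarith [this.1, this.2]
      have : (2 ^ K : ℝ) * (V 0 - L * c k) ≤ (2 ^ K : ℝ) * V (c k) := by
        apply mul_le_mul_of_nonneg_left hVc (by positivity)
      linarith
    have hsum : (∑ k, (2 ^ K : ℝ) * (V 0 - L * c k)) ≤
        ∑ k : Fin K, ∑ m : Fin K → Bool,
          V (sgnB (m k) *
            dotp (w k) (fun i => X ω i + ∑ j : Fin K, sgnB (m j) * w j i)) :=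
      Finset.sum_le_sum fun k _ => hk k
    rw [Finset.sum_comm, ← Finset.mul_sum] at hsum
    have e0 : ∑ k : Fin K, (V 0 - L * c k) = (K : ℝ) * V 0 - L * ∑ k, c k := by
      rw [Finset.sum_sub_distrib, Finset.sum_const, Finset.card_univ,
        Fintype.card_fin, nsmul_eq_mul, Finset.mul_sum]
    calc (K : ℝ) * V 0 - L * ∑ k, c k
        = (2 ^ K : ℝ)⁻¹ * ((2 ^ K : ℝ) * ∑ k : Fin K, (V 0 - L * c k)) := by
          rw [e0]; field_simp
      _ ≤ g ω := mul_le_mul_of_nonneg_left hsum (by positivity)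
  -- integrability
  set S : ℝ := ∑ k : Fin K, ∑ i : Fin D, |w k i| with hS
  have hSnn : 0 ≤ S := Finset.sum_nonneg fun k _ =>
    Finset.sum_nonneg fun i _ => abs_nonneg _
  have hXle : ∀ ω (i : Fin D), |X ω i| ≤ Real.sqrt (dotp (X ω) (X ω)) := by
    intro ω i
    rw [← Real.sqrt_mul_self_eq_abs]
    apply Real.sqrt_le_sqrt
    exact Finset.single_le_sum (fun i _ => mul_self_nonneg (X ω i)) (Finset.mem_univ i)
  have hterm : ∀ (m : Fin K → Bool) (k : Fin K),
      Integrable (fun ω => V (sgnB (m k) *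
        dotp (w k) (fun i => X ω i + ∑ j : Fin K, sgnB (m j) * w j i))) ℙ := by
    intro m k
    have hmeas : Measurable (fun ω => sgnB (m k) *
        dotp (w k) (fun i => X ω i + ∑ j : Fin K, sgnB (m j) * w j i)) := by
      apply Measurable.const_mul
      unfold dotp
      apply Finset.measurable_sum
      intro i _
      exact (((measurable_pi_apply i).comp hX).add_const _).const_mul _
    have hVmeas : Measurable (fun ω => V (sgnB (m k) *
        dotp (w k) (fun i => X ω i + ∑ j : Fin K, sgnB (m j) * w j i))) :=
      hLip.continuous.measurable.comp hmeas
    apply Integrable.mono'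
      ((integrable_const (|V 0| + L * S * S)).add (hint.const_mul (L * S)))
      hVmeas.aestronglyMeasurable
    filter_upwards with ω
    have hargle : |sgnB (m k) *
        dotp (w k) (fun i => X ω i + ∑ j : Fin K, sgnB (m j) * w j i)|
        ≤ S * (Real.sqrt (dotp (X ω) (X ω)) + S) := by
      rw [abs_mul, hsgn_abs, one_mul]
      calc |dotp (w k) (fun i => X ω i + ∑ j : Fin K, sgnB (m j) * w j i)|
          ≤ ∑ i, |w k i * (X ω i + ∑ j : Fin K, sgnB (m j) * w j i)| := by
            exact Finset.abs_sum_le_sum_abs _ _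
        _ ≤ ∑ i, |w k i| * (Real.sqrt (dotp (X ω) (X ω)) + S) := by
            apply Finset.sum_le_sum
            intro i _
            rw [abs_mul]
            apply mul_le_mul_of_nonneg_left _ (abs_nonneg _)
            calc |X ω i + ∑ j : Fin K, sgnB (m j) * w j i|
                ≤ |X ω i| + ∑ j : Fin K, |sgnB (m j) * w j i| :=
                  (abs_add_le _ _).trans (by gcongr; exact Finset.abs_sum_le_sum_abs _ _)
              _ ≤ Real.sqrt (dotp (X ω) (X ω)) + S := by
                  gcongr
                  · exact hXle ω i
                  · calc ∑ j : Fin K, |sgnB (m j) * w j i|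
                        = ∑ j : Fin K, |w j i| := by
                          apply Finset.sum_congr rfl
                          intro j _; rw [abs_mul, hsgn_abs, one_mul]
                      _ ≤ S := by
                          apply Finset.sum_le_sum
                          intro j _
                          exact Finset.single_le_sum
                            (fun i' _ => abs_nonneg (w j i')) (Finset.mem_univ i)
        _ = (∑ i, |w k i|) * (Real.sqrt (dotp (X ω) (X ω)) + S) := by
            rw [← Finset.sum_mul]
        _ ≤ S * (Real.sqrt (dotp (X ω) (X ω)) + S) := by
            apply mul_le_mul_of_nonneg_right _
              (by positivity)
            exact Finset.single_le_sum
              (fun k' _ => Finset.sum_nonneg fun i' _ => abs_nonneg (w k' i'))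
              (Finset.mem_univ k)
    have hV : ∀ t : ℝ, |V t| ≤ |V 0| + L * |t| := by
      intro t
      have := hlipR t 0
      rw [sub_zero] at this
      calc |V t| = |V 0 + (V t - V 0)| := by ring_nf
        _ ≤ |V 0| + |V t - V 0| := abs_add_le _ _
        _ ≤ |V 0| + L * |t| := by linarith
    calc ‖V (sgnB (m k) *
        dotp (w k) (fun i => X ω i + ∑ j : Fin K, sgnB (m j) * w j i))‖
        ≤ |V 0| + L * (S * (Real.sqrt (dotp (X ω) (X ω)) + S)) := by
          refine (hV _).trans ?_
          gcongr
      _ = (|V 0| + L * S * S) + L * S * Real.sqrt (dotp (X ω) (X ω)) := by ring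
  have hgint : Integrable g ℙ := by
    rw [hg]
    apply Integrable.const_mul
    apply integrable_finset_sum
    intro m _
    exact integrable_finset_sum _ fun k _ => hterm m k
  -- conclude
  have hintge : (K : ℝ) * V 0 - L * ∑ k, c k ≤ ∫ ω, g ω ∂ℙ := by
    have := integral_mono (integrable_const ((K : ℝ) * V 0 - L * ∑ k, c k)) hgint key
    simpa using this
  have hβL : L < β := by
    have h1 : (1:ℝ) ≤ (K:ℝ) := by exact_mod_cast hK
    nlinarith
  have hLfw : Lfun w = (∫ ω, g ω ∂ℙ) + β * ∑ k, c k := by rw [hLfun]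
  rw [hzero, hLfw]
  nlinarith [mul_pos (sub_pos.2 hβL) hcpos]
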